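/- arXiv:1206.5434 — 4 statements merged into one kernel-verified Lean document; each statement's English description precedes it below -/
import Mathlib

section
/- Let $(\mathcal{A},\curlywedge,\lozenge)$ be an ungraded pre-$(0,0)$-algebra (pre-Poisson algebra): $\curlywedge$ is Zinbiel, $\lozenge$ is right pre-Lie, and the compatibilities $\alpha\curlywedge(\beta\lozenge\gamma) = \alpha\curlywedge(\gamma\lozenge\beta)$, $\alpha\lozenge(\beta\curlywedge\gamma) = (\alpha\lozenge\beta)\curlywedge\gamma$, and $(\alpha\lozenge\beta)\curlywedge\gamma = (\alpha\curlywedge\gamma)\lozenge\beta$ hold. Then with $[\alpha,\beta] = \alpha\lozenge\beta - \beta\lozenge\alpha$ and $\alpha\cdot\beta = \alpha\curlywedge\beta + \beta\curlywedge\alpha$, the triple $(\mathcal{A},\cdot,[\,,\,])$ is a Poisson algebra: $\cdot$ is commutative associative, $[\,,\,]$ is Lie, and $[\alpha,\beta\cdot\gamma] = [\alpha,\beta]\cdot\gamma + \beta\cdot[\alpha,\gamma]$. -/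
/-- A pre-Poisson algebra (pre-`(0,0)`-algebra) gives rise to a Poisson algebra via
symmetrization of the Zinbiel product and antisymmetrization of the pre-Lie product. -/
theorem prePoisson_gives_poisson {K V : Type*} [Field K] [CharZero K]
    [AddCommGroup V] [Module K V]
    (c l : V →ₗ[K] V →ₗ[K] V)
    (hz : ∀ x y z : V, c (c x y) z = c x (c y z) + c x (c z y))
    (hp : ∀ x y z : V, l (l x y) z - l x (l y z) = l (l x z) y - l x (l z y))
    (hc1 : ∀ x y z : V, c x (l y z) = c x (l z y))
    (hc2 : ∀ x y z : V, l x (c y z) = c (l x y) z)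
    (hc3 : ∀ x y z : V, c (l x y) z = l (c x z) y) :
    (∀ x y : V, c x y + c y x = c y x + c x y) ∧
    (∀ x y z : V,
      c (c x y + c y x) z + c z (c x y + c y x) =
      c x (c y z + c z y) + c (c y z + c z y) x) ∧
    (∀ x y : V, l x y - l y x = -(l y x - l x y)) ∧
    (∀ x y z : V,
      (l (l x y - l y x) z - l z (l x y - l y x)) +
      (l (l y z - l z y) x - l x (l y z - l z y)) +
      (l (l z x - l x z) y - l y (l z x - l x z)) = 0) ∧
    (∀ x y z : V,
      l x (c y z + c z y) - l (c y z + c z y) x =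
      (c (l x y - l y x) z + c z (l x y - l y x)) +
      (c y (l x z - l z x) + c (l x z - l z x) y)) := by
  refine ⟨fun x y => add_comm _ _, fun x y z => ?_, fun x y => (neg_sub _ _).symm,
    fun x y z => ?_, fun x y z => ?_⟩
  · simp only [map_add, LinearMap.add_apply]
    linear_combination (norm := abel) hz x y z + hz y x z - hz z y x - hz y z x
  · simp only [map_add, map_sub, LinearMap.add_apply, LinearMap.sub_apply]
    linear_combination (norm := abel) hp x y z + hp y z x + hp z x y
  · simp only [map_add, map_sub, LinearMap.add_apply, LinearMap.sub_apply]
    linear_combination (norm := abel) hc2 x y z + hc2 x z y + hc3 y x z + hc3 z x y - hc1 z x y - hc1 y x z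
end

section
/- Let $(\mathcal{A},\curlywedge,\lozenge)$ be an ungraded pre-Poisson algebra. Then the symmetrized product $\alpha\cdot\beta = \alpha\curlywedge\beta + \beta\curlywedge\alpha$ and antisymmetrized bracket $[\alpha,\beta] = \alpha\lozenge\beta - \beta\lozenge\alpha$ satisfy the Leibniz rule: $[\alpha, \beta\cdot\gamma] = [\alpha,\beta]\cdot\gamma + \beta\cdot[\alpha,\gamma]$. -/
/-- In a pre-Poisson algebra the symmetrized product and antisymmetrized bracket
satisfy the Leibniz rule `[α, β·γ] = [α,β]·γ + β·[α,γ]`. -/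
theorem prePoisson_leibniz {K V : Type*} [Field K]
    [AddCommGroup V] [Module K V]
    (c l : V →ₗ[K] V →ₗ[K] V)
    (hz : ∀ x y z : V, c (c x y) z = c x (c y z) + c x (c z y))
    (hp : ∀ x y z : V, l (l x y) z - l x (l y z) = l (l x z) y - l x (l z y))
    (hc1 : ∀ x y z : V, c x (l y z) = c x (l z y))
    (hc2 : ∀ x y z : V, l x (c y z) = c (l x y) z)
    (hc3 : ∀ x y z : V, c (l x y) z = l (c x z) y) :
    ∀ α β γ : V,
      l α (c β γ + c γ β) - l (c β γ + c γ β) α =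
      (c (l α β - l β α) γ + c γ (l α β - l β α)) +
      (c β (l α γ - l γ α) + c (l α γ - l γ α) β) := by
  intro α β γ
  simp only [map_add, map_sub, LinearMap.add_apply, LinearMap.sub_apply]
  rw [hc2 α β γ, hc2 α γ β, hc3 β α γ, hc3 γ α β, hc1 γ α β, hc1 β α γ]
  abel
end

section
/- Let $(\mathcal{A},\curlywedge,\lozenge)$ be a graded pre-$(a,b)$-algebra. Define on $\mathcal{A}[-a+1]$ (with shifted degree $\alpha \mapsto |\alpha|+a-1$, written $\alpha$) the products $\alpha\wedge\beta = (-1)^{\alpha}\alpha\curlywedge\beta$ and $\alpha\diamond\beta = (-1)^{(b-a+1)\alpha}\alpha\lozenge\beta$. Then the shifted compatibility relations hold: $\alpha\wedge(\beta\diamond\gamma) = (-1)^{\beta\gamma+b-a+1}\alpha\wedge(\gamma\diamond\beta)$, $\alpha\diamond(\beta\wedge\gamma) = (-1)^{\alpha+b-a+1}(\alpha\diamond\beta)\wedge\gamma$, and $(\alpha\diamond\beta)\wedge\gamma = (-1)^{\beta\gamma+b-a+1}(\alpha\wedge\gamma)\diamond\beta$. -/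
/-- For a graded pre-`(a,b)`-algebra `𝒜` (homogeneity encoded by the predicate
`IsHomog x n`, `x` of degree `n : ℤ`), define on `𝒜[-a+1]` (shifted degree
`p = |α| + a - 1`) the products `α ∧ β = (-1)^p • (α ⋏ β)` and
`α ⋄ β = (-1)^((b-a+1)p) • (α ◊ β)` (encoded below as `W x y px` and `D x y px`,
`px` being the shifted degree of `x`). Then the shifted compatibility relations hold:
`α ∧ (β ⋄ γ) = (-1)^(qr+b-a+1) α ∧ (γ ⋄ β)`,
`α ⋄ (β ∧ γ) = (-1)^(p+b-a+1) (α ⋄ β) ∧ γ`,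
`(α ⋄ β) ∧ γ = (-1)^(qr+b-a+1) (α ∧ γ) ⋄ β`. -/
theorem pre_ab_shifted_compat {K A : Type*} [Field K] [AddCommGroup A] [Module K A]
    (a b : ℤ)
    (curly loz : A →ₗ[K] A →ₗ[K] A)
    (IsHomog : A → ℤ → Prop)
    (h_curly_deg : ∀ x y : A, ∀ n m : ℤ, IsHomog x n → IsHomog y m →
      IsHomog (curly x y) (n + m + a))
    (h_loz_deg : ∀ x y : A, ∀ n m : ℤ, IsHomog x n → IsHomog y m →
      IsHomog (loz x y) (n + m + b))
    (h_zinbiel : ∀ x y z : A, ∀ n m r : ℤ, IsHomog x n → IsHomog y m → IsHomog z r →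
      curly (curly x y) z =
        curly x (curly y z) + ((-1 : K)) ^ ((m + a) * (r + a)) • curly x (curly z y))
    (h_preLie : ∀ x y z : A, ∀ n m r : ℤ, IsHomog x n → IsHomog y m → IsHomog z r →
      loz (loz x y) z - loz x (loz y z) =
        ((-1 : K)) ^ ((m + b) * (r + b)) • (loz (loz x z) y - loz x (loz z y)))
    (h_compat1 : ∀ x y z : A, ∀ n m r : ℤ, IsHomog x n → IsHomog y m → IsHomog z r →
      curly x (loz y z) = ((-1 : K)) ^ ((m + b) * (r + b)) • curly x (loz z y))
    (h_compat2 : ∀ x y z : A, ∀ n m r : ℤ, IsHomog x n → IsHomog y m → IsHomog z r →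
      loz x (curly y z) = curly (loz x y) z)
    (h_compat3 : ∀ x y z : A, ∀ n m r : ℤ, IsHomog x n → IsHomog y m → IsHomog z r →
      curly (loz x y) z = ((-1 : K)) ^ ((m + b) * (r + a)) • loz (curly x z) y)
    -- the shifted products on `𝒜[-a+1]`
    (W D : A → A → ℤ → A)
    (hW : ∀ x y : A, ∀ px : ℤ, W x y px = ((-1 : K)) ^ px • curly x y)
    (hD : ∀ x y : A, ∀ px : ℤ, D x y px = ((-1 : K)) ^ ((b - a + 1) * px) • loz x y) :
    ∀ (α β γ : A) (p q r : ℤ),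
      IsHomog α (p - a + 1) → IsHomog β (q - a + 1) → IsHomog γ (r - a + 1) →
      (W α (D β γ q) p = ((-1 : K)) ^ (q * r + b - a + 1) • W α (D γ β r) p) ∧
      (D α (W β γ q) p =
        ((-1 : K)) ^ (p + b - a + 1) • W (D α β p) γ (p + q + b - a + 1)) ∧
      (W (D α β p) γ (p + q + b - a + 1) =
        ((-1 : K)) ^ (q * r + b - a + 1) • D (W α γ p) β (p + r + 1)) := by

  intro α β γ p q r hα hβ hγ
  have hne : (-1 : K) ≠ 0 := neg_ne_zero.mpr one_ne_zero
  have hpow : ∀ m n : ℤ, ((-1 : K)) ^ m * ((-1 : K)) ^ n = ((-1 : K)) ^ (m + n) :=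
    fun m n => (zpow_add₀ hne m n).symm
  have key : ∀ m n k : ℤ, m = n + 2 * k → ((-1 : K)) ^ m = ((-1 : K)) ^ n := by
    intro m n k hk
    rw [hk, zpow_add₀ hne]
    have h1 : ((-1 : K)) ^ (2 * k) = 1 := by
      rw [zpow_mul]; norm_num
    rw [h1, mul_one]
  obtain ⟨e, he⟩ := Int.even_mul_succ_self (b - a)
  refine ⟨?_, ?_, ?_⟩
  · rw [hW, hW, hD, hD, map_smul, map_smul,
      h_compat1 α β γ _ _ _ hα hβ hγ]
    simp only [smul_smul, mul_assoc, hpow]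
    congr 1
    exact key _ _ ((b - a + 1) * q + e) (by linear_combination he)
  · rw [hD, hD, hW, hW, map_smul,
      h_compat2 α β γ _ _ _ hα hβ hγ]
    simp only [map_smul, LinearMap.smul_apply, smul_smul, mul_assoc, hpow]
    congr 1
    exact key _ _ (-(p + (b - a + 1))) (by ring)
  · rw [hW, hD, hD, hW]
    simp only [map_smul, LinearMap.smul_apply, smul_smul, mul_assoc, hpow]
    rw [h_compat3 α β γ _ _ _ hα hβ hγ]
    simp only [smul_smul, mul_assoc, hpow]
    congr 1
    exact key _ _ q (by ring)
end

section
/- Let $(\mathcal{A},\curlywedge,\lozenge)$ be a graded pre-$(a,b)$-algebra. Define $\ell(\alpha,\beta) = \alpha\diamond\beta - (-1)^{\alpha\beta + b-a+1}\beta\diamond\alpha$ on $\mathcal{A}[-a+1]$ (degrees and $\diamond$ as induced by the shift). Then $\alpha\wedge\ell(\beta,\gamma) = 0$ and $\ell(\alpha,\beta\wedge\gamma) = (-1)^{\alpha+b-a+1}\ell(\alpha,\beta)\wedge\gamma$ for all homogeneous $\alpha,\beta,\gamma$. -/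
private lemma neg_one_zpow_congr {K : Type*} [Field K] {m n : ℤ}
    (h : ((m : ZMod 2)) = (n : ZMod 2)) : (-1 : K) ^ m = (-1 : K) ^ n := by
  have h2 : (2 : ℤ) ∣ (m - n) := by
    have : ((m - n : ℤ) : ZMod 2) = 0 := by push_cast; rw [h]; ring
    exact (ZMod.intCast_zmod_eq_zero_iff_dvd _ 2).mp this
  obtain ⟨k, hk⟩ := h2
  have hm : m = n + 2 * k := by omega
  subst hm
  rw [zpow_add₀ (by norm_num : (-1:K) ≠ 0), zpow_mul]
  norm_num


/-- For a graded pre-`(a,b)`-algebra, with the shifted products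
`α ∧ β = (-1)^p • (α ⋏ β)` and `α ⋄ β = (-1)^((b-a+1)p) • (α ◊ β)` on `𝒜[-a+1]`
(shifted degree `p = |α| + a - 1`; encoded as `W x y px`, `D x y px`) and the graded
antisymmetrization `ℓ(α,β) = α ⋄ β - (-1)^(pq+b-a+1) β ⋄ α` (encoded as `L x y px py`),
one has `α ∧ ℓ(β,γ) = 0` and `ℓ(α, β ∧ γ) = (-1)^(p+b-a+1) ℓ(α,β) ∧ γ`. -/
theorem pre_ab_shifted_bracket_relations {K A : Type*} [Field K] [AddCommGroup A] [Module K A]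
    (a b : ℤ)
    (curly loz : A →ₗ[K] A →ₗ[K] A)
    (IsHomog : A → ℤ → Prop)
    (h_curly_deg : ∀ x y : A, ∀ n m : ℤ, IsHomog x n → IsHomog y m →
      IsHomog (curly x y) (n + m + a))
    (h_loz_deg : ∀ x y : A, ∀ n m : ℤ, IsHomog x n → IsHomog y m →
      IsHomog (loz x y) (n + m + b))
    (h_zinbiel : ∀ x y z : A, ∀ n m r : ℤ, IsHomog x n → IsHomog y m → IsHomog z r →
      curly (curly x y) z =
        curly x (curly y z) + ((-1 : K)) ^ ((m + a) * (r + a)) • curly x (curly z y))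
    (h_preLie : ∀ x y z : A, ∀ n m r : ℤ, IsHomog x n → IsHomog y m → IsHomog z r →
      loz (loz x y) z - loz x (loz y z) =
        ((-1 : K)) ^ ((m + b) * (r + b)) • (loz (loz x z) y - loz x (loz z y)))
    (h_compat1 : ∀ x y z : A, ∀ n m r : ℤ, IsHomog x n → IsHomog y m → IsHomog z r →
      curly x (loz y z) = ((-1 : K)) ^ ((m + b) * (r + b)) • curly x (loz z y))
    (h_compat2 : ∀ x y z : A, ∀ n m r : ℤ, IsHomog x n → IsHomog y m → IsHomog z r →
      loz x (curly y z) = curly (loz x y) z)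
    (h_compat3 : ∀ x y z : A, ∀ n m r : ℤ, IsHomog x n → IsHomog y m → IsHomog z r →
      curly (loz x y) z = ((-1 : K)) ^ ((m + b) * (r + a)) • loz (curly x z) y)
    (W D : A → A → ℤ → A)
    (hW : ∀ x y : A, ∀ px : ℤ, W x y px = ((-1 : K)) ^ px • curly x y)
    (hD : ∀ x y : A, ∀ px : ℤ, D x y px = ((-1 : K)) ^ ((b - a + 1) * px) • loz x y)
    (L : A → A → ℤ → ℤ → A)
    (hL : ∀ x y : A, ∀ px py : ℤ,
      L x y px py = D x y px - ((-1 : K)) ^ (px * py + b - a + 1) • D y x py) :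
    ∀ (α β γ : A) (p q r : ℤ),
      IsHomog α (p - a + 1) → IsHomog β (q - a + 1) → IsHomog γ (r - a + 1) →
      (W α (L β γ q r) p = 0) ∧
      (L α (W β γ q) p (q + r + 1) =
        ((-1 : K)) ^ (p + b - a + 1) • W (L α β p q) γ (p + q + b - a + 1)) := by
  intro α β γ p q r hα hβ hγ
  have hne : (-1:K) ≠ 0 := by norm_num
  have sq : ∀ x : ZMod 2, x ^ 2 = x := by decide
  have two : (2 : ZMod 2) = 0 := by decide
  constructor
  · rw [hW, hL, hD, hD, map_sub, map_smul, map_smul, map_smul,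
      h_compat1 α β γ _ _ _ hα hβ hγ]
    simp only [smul_smul, smul_sub]
    rw [← sub_smul]
    convert zero_smul K _ using 2
    rw [sub_eq_zero]
    simp only [← zpow_add₀ hne, ← zpow_mul]
    apply neg_one_zpow_congr
    push_cast
    ring_nf
    linear_combination sq (b:ZMod 2) + sq (a:ZMod 2) +
      ((b:ZMod 2) - b*a + b*q - a*q + q) * two
  · rw [hL, hD, hD, hW, hL, hD, hD, hW]
    simp only [map_sub, map_smul, LinearMap.sub_apply, LinearMap.smul_apply]
    rw [h_compat2 α β γ _ _ _ hα hβ hγ, h_compat3 β α γ _ _ _ hβ hα hγ]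
    simp only [smul_smul, smul_sub, sub_smul]
    match_scalars
    · simp only [mul_one, ← zpow_add₀ hne]
      apply neg_one_zpow_congr
      push_cast; ring_nf
      linear_combination ((-1:ZMod 2) - b + a - p) * two
    · simp only [mul_one, neg_mul, mul_neg, neg_neg, ← zpow_add₀ hne]
      rw [neg_inj]
      apply neg_one_zpow_congr
      push_cast; ring_nf
      linear_combination ((-1:ZMod 2) - p - b + a) * two
end
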